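/- Let n be an odd integer and W an arbitrary integer. Define Λ as the quotient of the additive group of Laurent polynomials Z[t^{±1}] by the subgroup generated by t^0, t^{-1}, and t^k + (-1)^n t^{W-1-k} for all k ∈ Z. Then Λ is a free abelian group with basis the images of the monomials t^k for k ∈ Z satisfying k ≥ (W-1)/2 and k ∉ {-1, 0, W-1, W}. -/

import Mathlib

/-- The abelian group of integer Laurent polynomials `ℤ[t^{±1}]`,
with `t^k` represented by `Finsupp.single k 1`. -/
abbrev LaurentGrp : Type := ℤ →₀ ℤ

/-- The set of relators: `t^0`, `t^{-1}`, and `t^k + (-1)^n t^{W-1-k}` for all `k ∈ ℤ`. -/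
def relSet (n W : ℤ) : Set LaurentGrp :=
  {Finsupp.single 0 1, Finsupp.single (-1) 1} ∪
    {x | ∃ k : ℤ, x = Finsupp.single k 1 +
      Finsupp.single (W - 1 - k) (((-1 : ℤˣ) ^ n : ℤˣ) : ℤ)}

/-- The quotient group `Λ = ℤ[t^{±1}] / ⟨t^0, t^{-1}, t^k + (-1)^n t^{W-1-k}⟩`. -/
abbrev LambdaGrp (n W : ℤ) : Type := LaurentGrp ⧸ AddSubgroup.closure (relSet n W)

namespace Stmt0Aux

/-- index type of the basis -/
abbrev Idx (W : ℤ) := {k : ℤ // W - 1 ≤ 2 * k ∧ k ∉ ({-1, 0, W - 1, W} : Set ℤ)}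

/-- canonical representative of the pair `{k, W-1-k}` -/
def red (W k : ℤ) : ℤ := if W - 1 ≤ 2 * k then k else W - 1 - k

lemma red_le (W k : ℤ) : W - 1 ≤ 2 * red W k := by unfold red; split <;> omega

lemma red_symm (W k : ℤ) : red W (W - 1 - k) = red W k := by
  unfold red; split <;> split <;> omega

open Classical in
/-- image of the monomial `t^k` in the free module on `Idx W` -/
noncomputable def f (W : ℤ) (k : ℤ) : Idx W →₀ ℤ :=
  if h : red W k ∉ ({-1, 0, W - 1, W} : Set ℤ)
  then Finsupp.single ⟨red W k, ⟨red_le W k, h⟩⟩ 1 else 0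

lemma f_symm (W k : ℤ) : f W (W - 1 - k) = f W k := by
  simp only [f, red_symm]

lemma f_eq (W k : ℤ) (h : red W k ∉ ({-1, 0, W - 1, W} : Set ℤ)) :
    f W k = Finsupp.single ⟨red W k, ⟨red_le W k, h⟩⟩ 1 := by
  simp only [f]
  rw [dif_pos h]

lemma f_good (W : ℤ) (j : Idx W) : f W j.1 = Finsupp.single j 1 := by
  have hr : red W j.1 = j.1 := if_pos j.2.1
  have h : red W j.1 ∉ ({-1, 0, W - 1, W} : Set ℤ) := by rw [hr]; exact j.2.2
  rw [f_eq W j.1 h]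
  congr 1
  exact Subtype.ext hr

lemma f_bad (W k : ℤ) (h : red W k ∈ ({-1, 0, W - 1, W} : Set ℤ)) : f W k = 0 := by
  simp only [f]
  rw [dif_neg (not_not_intro h)]

/-- the map `ℤ[t^{±1}] → free module`, `t^k ↦ f W k` -/
noncomputable def φ (W : ℤ) : LaurentGrp →ₗ[ℤ] (Idx W →₀ ℤ) :=
  Finsupp.linearCombination ℤ (f W)

/-- the map `free module → ℤ[t^{±1}]`, basis vector `k ↦ t^k` -/
noncomputable def ι (W : ℤ) : (Idx W →₀ ℤ) →ₗ[ℤ] LaurentGrp :=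
  Finsupp.linearCombination ℤ (fun j => Finsupp.single j.1 1)

lemma φ_single (W : ℤ) (k c : ℤ) : φ W (Finsupp.single k c) = c • f W k :=
  Finsupp.linearCombination_single ..

lemma ι_single (W : ℤ) (j : Idx W) (c : ℤ) :
    ι W (Finsupp.single j c) = Finsupp.single j.1 c := by
  rw [ι, Finsupp.linearCombination_single, Finsupp.smul_single, smul_eq_mul, mul_one]

end Stmt0Aux

open Stmt0Aux in
/-- For `n` odd, `Λ` is free abelian with basis the images of the monomials `t^k`
for `k ≥ (W-1)/2`, `k ∉ {-1, 0, W-1, W}`. -/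
theorem stmt_0 (n W : ℤ) (hn : Odd n) :
    ∃ b : Module.Basis {k : ℤ // W - 1 ≤ 2 * k ∧ k ∉ ({-1, 0, W - 1, W} : Set ℤ)} ℤ
        (LambdaGrp n W),
      ∀ k, b k = (QuotientAddGroup.mk (Finsupp.single k.1 1) : LambdaGrp n W) := by
  have hc : (((-1 : ℤˣ) ^ n : ℤˣ) : ℤ) = -1 := by
    obtain ⟨k, rfl⟩ := hn
    rw [zpow_add, zpow_one, zpow_mul, show ((-1:ℤˣ)^(2:ℤ)) = 1 by decide, one_zpow]
    decide
  set S := AddSubgroup.closure (relSet n W) with hS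
  -- relators in the closure
  have h0 : Finsupp.single (0:ℤ) (1:ℤ) ∈ S :=
    AddSubgroup.subset_closure (Or.inl (Or.inl rfl))
  have hm1 : Finsupp.single (-1:ℤ) (1:ℤ) ∈ S :=
    AddSubgroup.subset_closure (Or.inl (Or.inr rfl))
  have hrel : ∀ k : ℤ, Finsupp.single k 1 - Finsupp.single (W - 1 - k) 1 ∈ S := by
    intro k
    have hmem : Finsupp.single k 1 +
        Finsupp.single (W - 1 - k) (((-1 : ℤˣ) ^ n : ℤˣ) : ℤ) ∈ S :=
      AddSubgroup.subset_closure (Or.inr ⟨k, rfl⟩)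
    rw [hc] at hmem
    rw [sub_eq_add_neg, ← Finsupp.single_neg]
    exact hmem
  have hW1 : Finsupp.single (W - 1 : ℤ) (1:ℤ) ∈ S := by
    have h := AddSubgroup.add_mem S (hrel (W - 1)) h0
    rw [show W - 1 - (W - 1) = 0 by ring, sub_add_cancel] at h
    exact h
  have hW : Finsupp.single (W : ℤ) (1:ℤ) ∈ S := by
    have h := AddSubgroup.add_mem S (hrel W) hm1
    rw [show W - 1 - W = -1 by ring, sub_add_cancel] at h
    exact h
  have hbad : ∀ k ∈ ({-1, 0, W - 1, W} : Set ℤ), Finsupp.single k (1:ℤ) ∈ S := by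
    intro k hk
    simp only [Set.mem_insert_iff, Set.mem_singleton_iff] at hk
    rcases hk with rfl | rfl | rfl | rfl
    exacts [hm1, h0, hW1, hW]
  -- φ kills the relators
  have hker : S ≤ (φ W).toAddMonoidHom.ker := by
    rw [hS]
    refine (AddSubgroup.closure_le _).mpr ?_
    rintro x (hx | ⟨k, rfl⟩)
    · rcases hx with rfl | rfl
      · show φ W (Finsupp.single 0 1) = 0
        rw [φ_single, one_smul]
        refine f_bad W 0 ?_
        have : red W 0 = 0 ∨ red W 0 = W - 1 := by unfold red; split <;> omega
        rcases this with h | h <;> rw [h] <;> simp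
      · show φ W (Finsupp.single (-1) 1) = 0
        rw [φ_single, one_smul]
        refine f_bad W (-1) ?_
        have : red W (-1) = -1 ∨ red W (-1) = W := by unfold red; split <;> omega
        rcases this with h | h <;> rw [h] <;> simp
    · show φ W (Finsupp.single k 1 + Finsupp.single (W - 1 - k) _) = 0
      rw [hc, map_add, φ_single, φ_single, one_smul, f_symm]
      simp
  -- the induced map on the quotient
  let ψ : LambdaGrp n W →ₗ[ℤ] (Idx W →₀ ℤ) :=
    (QuotientAddGroup.lift S (φ W).toAddMonoidHom hker).toIntLinearMap
  have ψ_mk : ∀ x : LaurentGrp, ψ (QuotientAddGroup.mk x) = φ W x := fun _ => rfl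
  let π : LaurentGrp →ₗ[ℤ] LambdaGrp n W := (QuotientAddGroup.mk' S).toIntLinearMap
  have π_apply : ∀ x : LaurentGrp, π x = QuotientAddGroup.mk x := fun _ => rfl
  let g : (Idx W →₀ ℤ) →ₗ[ℤ] LambdaGrp n W := π.comp (ι W)
  -- key computation : t^k ≡ ι (f W k) mod S
  have key : ∀ k : ℤ, (QuotientAddGroup.mk (Finsupp.single k 1) : LambdaGrp n W) =
      QuotientAddGroup.mk (ι W (f W k)) := by
    intro k
    have hredk : (QuotientAddGroup.mk (Finsupp.single k 1) : LambdaGrp n W) =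
        QuotientAddGroup.mk (Finsupp.single (red W k) 1) := by
      by_cases h : W - 1 ≤ 2 * k
      · rw [show red W k = k from if_pos h]
      · rw [show red W k = W - 1 - k from if_neg h]
        exact QuotientAddGroup.eq_iff_sub_mem.mpr (hrel k)
    by_cases hgood : red W k ∉ ({-1, 0, W - 1, W} : Set ℤ)
    · rw [f_eq W k hgood, ι_single]
      exact hredk
    · push_neg at hgood
      rw [f_bad W k hgood, map_zero]
      rw [hredk]
      exact (QuotientAddGroup.eq_zero_iff _).mpr (hbad _ hgood)
  have h1 : ψ.comp g = LinearMap.id := by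
    apply Finsupp.lhom_ext
    intro j b
    show ψ (π (ι W (Finsupp.single j b))) = Finsupp.single j b
    rw [ι_single, π_apply, ψ_mk, φ_single, f_good, Finsupp.smul_single, smul_eq_mul,
      mul_one]
  have h2 : g.comp ψ = LinearMap.id := by
    apply LinearMap.ext
    intro x
    induction x using QuotientAddGroup.induction_on with
    | H x =>
      show π (ι W (φ W x)) = QuotientAddGroup.mk x
      induction x using Finsupp.induction_linear with
      | zero => simp
      | add a b ha hb => rw [map_add, map_add, map_add, ha, hb]; rfl
      | single k b =>
        rw [φ_single, map_smul, map_smul, π_apply, ← key k, ← π_apply, ← map_smul,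
          π_apply, Finsupp.smul_single, smul_eq_mul, mul_one]
  let e : LambdaGrp n W ≃ₗ[ℤ] (Idx W →₀ ℤ) := LinearEquiv.ofLinear ψ g h1 h2
  refine ⟨Module.Basis.ofRepr e, fun k => ?_⟩
  have : (Module.Basis.ofRepr e) k = e.symm (Finsupp.single k 1) := by
    rw [Module.Basis.coe_ofRepr]
  rw [this]
  show g (Finsupp.single k 1) = _
  show π (ι W (Finsupp.single k 1)) = _
  rw [ι_single, π_apply]
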